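/- arXiv:1608.03544 — 2 statements merged into one kernel-verified Lean document; each statement's English description precedes it below -/
import Mathlib

section
/- Let u_1,...,u_n be unit vectors in R^d, x ∈ R^d with ||x|| ≤ 1, satisfying the γ-gap assumption with respect to x. Let w_1,...,w_n ∈ R^d and cb_1,...,cb_n ≥ 0 satisfy |u_j^T x - w_j^T x| ≤ cb_j for all j and cb_j < γ/4 for all j. Fix a user index i and define the true neighborhood N_i = {j : u_j^T x = u_i^T x} and the estimated neighborhood N̂_i = {j : |w_i^T x - w_j^T x| ≤ cb_i + cb_j}. Then N̂_i = N_i. -/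
theorem stmt_2 {n d : ℕ} (u w : Fin n → EuclideanSpace ℝ (Fin d))
    (x : EuclideanSpace ℝ (Fin d)) (γ : ℝ) (hγ : 0 < γ)
    (hu : ∀ i, ‖u i‖ = 1) (hx : ‖x‖ ≤ 1)
    (hgap : ∀ i j : Fin n, (inner ℝ (u i) x : ℝ) = (inner ℝ (u j) x : ℝ) ∨
      γ ≤ |(inner ℝ (u i) x : ℝ) - (inner ℝ (u j) x : ℝ)|)
    (cb : Fin n → ℝ) (hcb : ∀ j, 0 ≤ cb j)
    (happ : ∀ j, |(inner ℝ (u j) x : ℝ) - (inner ℝ (w j) x : ℝ)| ≤ cb j)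
    (hconf : ∀ j, cb j < γ / 4) (i : Fin n) :
    {j : Fin n | |(inner ℝ (w i) x : ℝ) - (inner ℝ (w j) x : ℝ)| ≤ cb i + cb j}
      = {j : Fin n | (inner ℝ (u j) x : ℝ) = (inner ℝ (u i) x : ℝ)} := by
  ext j
  simp only [Set.mem_setOf_eq]
  have hi := happ i
  have hj := happ j
  constructor
  · intro h
    rcases hgap j i with he | hge
    · exact he
    · exfalso
      have : |(inner ℝ (u j) x : ℝ) - (inner ℝ (u i) x : ℝ)| ≤ cb j + (cb i + cb j) + cb i := by
        have := abs_sub_abs_le_abs_sub ((inner ℝ (u j) x : ℝ)) ((inner ℝ (u i) x : ℝ))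
        calc |(inner ℝ (u j) x : ℝ) - (inner ℝ (u i) x : ℝ)|
            = |((inner ℝ (u j) x : ℝ) - (inner ℝ (w j) x : ℝ)) + ((inner ℝ (w j) x : ℝ) - (inner ℝ (w i) x : ℝ)) + ((inner ℝ (w i) x : ℝ) - (inner ℝ (u i) x : ℝ))| := by ring_nf
          _ ≤ |(inner ℝ (u j) x : ℝ) - (inner ℝ (w j) x : ℝ)| + |(inner ℝ (w j) x : ℝ) - (inner ℝ (w i) x : ℝ)| + |(inner ℝ (w i) x : ℝ) - (inner ℝ (u i) x : ℝ)| := by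
              exact (abs_add_le _ _).trans (add_le_add_left (abs_add_le _ _) _)
          _ ≤ cb j + (cb i + cb j) + cb i := by
              refine add_le_add (add_le_add hj ?_) ?_
              · rwa [abs_sub_comm]
              · rwa [abs_sub_comm]
      have hci := hconf i; have hcj := hconf j
      linarith
  · intro h
    calc |(inner ℝ (w i) x : ℝ) - (inner ℝ (w j) x : ℝ)|
        = |((inner ℝ (w i) x : ℝ) - (inner ℝ (u i) x : ℝ)) + ((inner ℝ (u i) x : ℝ) - (inner ℝ (u j) x : ℝ)) + ((inner ℝ (u j) x : ℝ) - (inner ℝ (w j) x : ℝ))| := by ring_nf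
      _ ≤ |(inner ℝ (w i) x : ℝ) - (inner ℝ (u i) x : ℝ)| + |(inner ℝ (u i) x : ℝ) - (inner ℝ (u j) x : ℝ)| + |(inner ℝ (u j) x : ℝ) - (inner ℝ (w j) x : ℝ)| :=
          (abs_add_le _ _).trans (add_le_add_left (abs_add_le _ _) _)
      _ ≤ cb i + 0 + cb j := by
          refine add_le_add (add_le_add ?_ ?_) hj
          · rwa [abs_sub_comm]
          · rw [h]; simp
      _ = cb i + cb j := by ring
end

section
/- Let x_1,...,x_m ∈ R^d with ||x_s|| ≤ 1 for all s, and define M_0 = I and M_s = M_{s-1} + x_s x_s^T. Then Σ_{s=1}^m x_s^T M_{s-1}^{-1} x_s ≤ 2 log(det(M_m)) ≤ 2 d log(1 + m/d) ≤ 2 d log(1+m). -/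
open Matrix Finset Real

private lemma aux_vecMulVec_posSemidef {n : Type*} [Fintype n] (v : n → ℝ) :
    (Matrix.vecMulVec v v).PosSemidef := by
  have h : Matrix.vecMulVec v v = Matrix.replicateCol Unit v * (Matrix.replicateCol Unit v)ᴴ := by
    rw [Matrix.conjTranspose_replicateCol, Matrix.vecMulVec_eq Unit]
    congr 1
  rw [h]
  exact Matrix.posSemidef_self_mul_conjTranspose _

private lemma aux_one_posDef {n : Type*} [Fintype n] [DecidableEq n] :
    (1 : Matrix n n ℝ).PosDef := by
  rw [← Matrix.diagonal_one]
  exact Matrix.PosDef.diagonal (fun i => one_pos)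

private lemma aux_sum_psd {n : Type*} [Fintype n] (t : ℕ) (x : ℕ → n → ℝ) :
    (∑ k ∈ Finset.range t, Matrix.vecMulVec (x k) (x k)).PosSemidef := by
  induction t with
  | zero => simpa using Matrix.PosSemidef.zero
  | succ t ih =>
      rw [Finset.sum_range_succ]
      exact ih.add (aux_vecMulVec_posSemidef _)

private lemma aux_le_two_log {u : ℝ} (h0 : 0 ≤ u) (h1 : u ≤ 1) :
    u ≤ 2 * Real.log (1 + u) := by
  have hpos : (0 : ℝ) < 1 - u / 2 := by linarith
  have hexp : Real.exp (u / 2) ≤ 1 + u := by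
    have h2 : 1 - u / 2 ≤ Real.exp (-(u / 2)) := by
      linarith [Real.add_one_le_exp (-(u / 2))]
    have h3 : Real.exp (u / 2) * (1 - u / 2) ≤ 1 := by
      calc Real.exp (u / 2) * (1 - u / 2) ≤ Real.exp (u / 2) * Real.exp (-(u / 2)) := by
            exact mul_le_mul_of_nonneg_left h2 (Real.exp_pos _).le
        _ = 1 := by rw [← Real.exp_add]; simp
    have h4 : (1 : ℝ) ≤ (1 + u) * (1 - u / 2) := by nlinarith
    nlinarith [h3, h4, hpos]
  have := Real.log_le_log (Real.exp_pos _) hexp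
  rw [Real.log_exp] at this
  linarith

theorem stmt_9 {d : ℕ} (hd : 0 < d) (m : ℕ) (x : ℕ → (Fin d → ℝ))
    (hx : ∀ s < m, dotProduct (x s) (x s) ≤ 1)
    (M : ℕ → Matrix (Fin d) (Fin d) ℝ)
    (hM : ∀ t, M t = 1 + ∑ k ∈ Finset.range t, Matrix.vecMulVec (x k) (x k)) :
    (∑ s ∈ Finset.range m, dotProduct (x s) ((M s)⁻¹.mulVec (x s)))
        ≤ 2 * Real.log (M m).det ∧
    2 * Real.log (M m).det ≤ 2 * d * Real.log (1 + (m : ℝ) / d) ∧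
    2 * d * Real.log (1 + (m : ℝ) / d) ≤ 2 * d * Real.log (1 + (m : ℝ)) := by
  -- basic positivity facts
  have hMpd : ∀ t, (M t).PosDef := by
    intro t
    rw [hM t]
    exact aux_one_posDef.add_posSemidef (aux_sum_psd t x)
  -- lower bound on the quadratic form of M t
  have hquadge : ∀ t (z : Fin d → ℝ), z ⬝ᵥ z ≤ z ⬝ᵥ ((M t) *ᵥ z) := by
    intro t z
    rw [hM t, Matrix.add_mulVec, dotProduct_add, Matrix.one_mulVec]
    have := (aux_sum_psd t x).dotProduct_mulVec_nonneg z
    simp only [star_trivial] at this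
    linarith
  set u : ℕ → ℝ := fun s => x s ⬝ᵥ ((M s)⁻¹ *ᵥ x s) with hu
  have hu0 : ∀ s, 0 ≤ u s := by
    intro s
    have := (hMpd s).inv.posSemidef.dotProduct_mulVec_nonneg (x s)
    simpa using this
  have hu1 : ∀ s < m, u s ≤ 1 := by
    intro s hs
    have hinv : (M s) *ᵥ ((M s)⁻¹ *ᵥ x s) = x s := by
      rw [Matrix.mulVec_mulVec, Matrix.mul_nonsing_inv _ (hMpd s).det_pos.ne'.isUnit,
        Matrix.one_mulVec]
    set y := (M s)⁻¹ *ᵥ x s with hy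
    have hyy : y ⬝ᵥ y ≤ u s := by
      have := hquadge s y
      rw [hy] at this
      rw [hinv] at this
      calc y ⬝ᵥ y ≤ y ⬝ᵥ x s := this
        _ = u s := by rw [dotProduct_comm]
    have hcs : (u s) ^ 2 ≤ (x s ⬝ᵥ x s) * (y ⬝ᵥ y) := by
      simpa [hu, ← hy, dotProduct, pow_two] using
        Finset.sum_mul_sq_le_sq_mul_sq Finset.univ (x s) y
    have hxx0 : 0 ≤ x s ⬝ᵥ x s := Finset.sum_nonneg fun i _ => mul_self_nonneg _
    rcases eq_or_lt_of_le (hu0 s) with h | h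
    · linarith [hx s hs]
    · have : u s * u s ≤ (x s ⬝ᵥ x s) * u s := by
        calc u s * u s = u s ^ 2 := (sq (u s)).symm
          _ ≤ (x s ⬝ᵥ x s) * (y ⬝ᵥ y) := hcs
          _ ≤ (x s ⬝ᵥ x s) * u s := mul_le_mul_of_nonneg_left hyy hxx0
      have := le_of_mul_le_mul_right this h
      linarith [hx s hs]
  -- determinant recursion
  have hstep : ∀ t, (M (t + 1)).det = (M t).det * (1 + u t) := by
    intro t
    have hMt1 : M (t + 1) = M t + Matrix.replicateCol Unit (x t) * Matrix.replicateRow Unit (x t) := by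
      rw [hM (t + 1), hM t, Finset.sum_range_succ, ← add_assoc, Matrix.vecMulVec_eq Unit]
    rw [hMt1, Matrix.det_add_replicateCol_mul_replicateRow (hMpd t).det_pos.ne'.isUnit]
    congr 1
    rw [Matrix.det_unique]
    simp only [Pi.add_apply, Matrix.one_apply_eq, Matrix.add_apply]
    rw [Matrix.mul_assoc, ← Matrix.replicateCol_mulVec, Matrix.replicateRow_mul_replicateCol_apply]
  have hdetlog : ∀ t, Real.log (M t).det = ∑ s ∈ Finset.range t, Real.log (1 + u s) := by
    intro t
    induction t with
    | zero => simp [hM 0]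
    | succ t ih =>
        rw [hstep t, Real.log_mul (hMpd t).det_pos.ne' (by linarith [hu0 t]),
          Finset.sum_range_succ, ih]
  -- Part 1
  have part1 : (∑ s ∈ Finset.range m, x s ⬝ᵥ ((M s)⁻¹ *ᵥ x s)) ≤ 2 * Real.log (M m).det := by
    rw [hdetlog m, Finset.mul_sum]
    exact Finset.sum_le_sum fun s hs =>
      aux_le_two_log (hu0 s) (hu1 s (Finset.mem_range.mp hs))
  -- Spectral facts
  have hH : (M m).IsHermitian := (hMpd m).isHermitian
  have hev := fun i => (hMpd m).eigenvalues_pos i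
  have hdet_prod : (M m).det = ∏ i, hH.eigenvalues i := by
    simpa using hH.det_eq_prod_eigenvalues
  have htr_sum : (M m).trace = ∑ i, hH.eigenvalues i := by
    simpa using hH.trace_eq_sum_eigenvalues
  -- trace bound
  have htrace : (M m).trace ≤ (d : ℝ) + m := by
    rw [hM m]
    rw [Matrix.trace_add, Matrix.trace_one]
    have h1 : Matrix.trace (∑ k ∈ Finset.range m, Matrix.vecMulVec (x k) (x k))
        = ∑ k ∈ Finset.range m, (x k ⬝ᵥ x k) := by
      rw [Matrix.trace_sum]
      refine Finset.sum_congr rfl fun k _ => ?_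
      simp [Matrix.trace, Matrix.diag, Matrix.vecMulVec_apply, dotProduct]
    rw [h1]
    have h2 : ∑ k ∈ Finset.range m, (x k ⬝ᵥ x k) ≤ ∑ k ∈ Finset.range m, (1 : ℝ) :=
      Finset.sum_le_sum fun k hk => hx k (Finset.mem_range.mp hk)
    simp only [Finset.sum_const, Finset.card_range, smul_eq_mul, mul_one] at h2
    simpa [Fintype.card_fin] using add_le_add_left h2 (d : ℝ)
  haveI : Nonempty (Fin d) := Fin.pos_iff_nonempty.mp hd
  have hdR : (0 : ℝ) < d := Nat.cast_pos.mpr hd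
  -- AM-GM: det ≤ (trace / d)^d
  have hAMGM : (M m).det ≤ ((M m).trace / d) ^ d := by
    have hw : ∑ _i : Fin d, ((d : ℝ)⁻¹) = 1 := by
      simp [Finset.sum_const, Fintype.card_fin]
      field_simp
    have := Real.geom_mean_le_arith_mean_weighted Finset.univ (fun _ => (d : ℝ)⁻¹)
      hH.eigenvalues (fun i _ => by positivity) hw (fun i _ => (hev i).le)
    have hlhs : (∏ i, hH.eigenvalues i ^ ((d : ℝ)⁻¹)) = ((M m).det) ^ ((d : ℝ)⁻¹) := by
      rw [hdet_prod, ← Real.finset_prod_rpow _ _ (fun i _ => (hev i).le)]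
    have hrhs : (∑ i, (d : ℝ)⁻¹ * hH.eigenvalues i) = (M m).trace / d := by
      rw [← Finset.mul_sum, ← htr_sum]
      ring
    rw [hlhs, hrhs] at this
    calc (M m).det = (((M m).det) ^ ((d : ℝ)⁻¹)) ^ d := by
          rw [← Nat.cast_inj (R := ℝ) |>.mpr rfl]
          rw [show ((d : ℝ)⁻¹) = ((d : ℕ) : ℝ)⁻¹ from rfl]
          rw [Real.rpow_inv_natCast_pow (hMpd m).det_pos.le hd.ne']
      _ ≤ ((M m).trace / d) ^ d := by
          apply pow_le_pow_left₀ (Real.rpow_nonneg (hMpd m).det_pos.le _) this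
  have htrace_pos : 0 < (M m).trace := by
    rw [htr_sum]
    exact Finset.sum_pos (fun i _ => hev i) Finset.univ_nonempty
  -- Part 2
  have part2 : 2 * Real.log (M m).det ≤ 2 * d * Real.log (1 + (m : ℝ) / d) := by
    have h1 : Real.log (M m).det ≤ Real.log (((M m).trace / d) ^ d) :=
      Real.log_le_log (hMpd m).det_pos hAMGM
    rw [Real.log_pow] at h1
    have h2 : (M m).trace / d ≤ 1 + (m : ℝ) / d := by
      rw [div_le_iff₀ hdR]
      calc (M m).trace ≤ (d : ℝ) + m := htrace
        _ = (1 + (m : ℝ) / d) * d := by field_simp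
    have h3 : Real.log ((M m).trace / d) ≤ Real.log (1 + (m : ℝ) / d) :=
      Real.log_le_log (div_pos htrace_pos hdR) h2
    calc 2 * Real.log (M m).det ≤ 2 * ((d : ℝ) * Real.log ((M m).trace / d)) := by linarith
      _ ≤ 2 * ((d : ℝ) * Real.log (1 + (m : ℝ) / d)) := by
          have := mul_le_mul_of_nonneg_left h3 hdR.le
          linarith
      _ = 2 * d * Real.log (1 + (m : ℝ) / d) := by ring
  -- Part 3
  have part3 : 2 * d * Real.log (1 + (m : ℝ) / d) ≤ 2 * d * Real.log (1 + (m : ℝ)) := by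
    have h1 : (m : ℝ) / d ≤ m := div_le_self (Nat.cast_nonneg m) (by exact_mod_cast hd)
    have h2 : Real.log (1 + (m : ℝ) / d) ≤ Real.log (1 + (m : ℝ)) :=
      Real.log_le_log (by positivity) (by linarith)
    have : (0 : ℝ) ≤ 2 * d := by positivity
    exact mul_le_mul_of_nonneg_left h2 this
  exact ⟨part1, part2, part3⟩
end
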